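/- Let P ∈ ℂ[X] be a nonconstant polynomial such that every root of P has modulus at most 1 and every root of P of modulus exactly 1 is a simple root of P. Then every root of the derivative P' has modulus strictly less than 1. -/

import Mathlib

open Polynomial in
lemma logd_aux (z : ℂ) : ∀ (s : Multiset ℂ), (∀ r ∈ s, z ≠ r) →
    eval z (derivative (s.map (fun r => X - C r)).prod) =
    eval z (s.map (fun r => X - C r)).prod * (s.map (fun r => (z - r)⁻¹)).sum := by
  refine Multiset.induction ?_ ?_
  · simp
  · intro a t ih h
    have ha : z - a ≠ 0 := sub_ne_zero.mpr (h a (Multiset.mem_cons_self a t))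
    have ih' := ih (fun r hr => h r (Multiset.mem_cons_of_mem hr))
    simp only [Multiset.map_cons, Multiset.prod_cons, Multiset.sum_cons, derivative_mul,
      derivative_sub, derivative_X, derivative_C, sub_zero, one_mul, eval_add, eval_mul,
      eval_sub, eval_X, eval_C, ih']
    field_simp

lemma aux_re_lt (w : ℂ) (hw : ‖w‖ = 1) (hne : w ≠ 1) : w.re < 1 := by
  rcases lt_or_eq_of_le (le_trans (Complex.re_le_norm w) (le_of_eq hw)) with h | h
  · exact h
  · exfalso
    apply hne
    have h2 : Complex.normSq w = 1 := by rw [← Complex.sq_norm, hw]; norm_num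
    rw [Complex.normSq_apply, h] at h2
    have him : w.im = 0 := by nlinarith
    exact Complex.ext (by simp [h]) (by simp [him])


/-- if `P` is a nonconstant polynomial whose roots all have modulus at
most 1, the ones of modulus exactly 1 being simple, then all roots of `P'` have
modulus strictly less than 1. -/
theorem stmt_5 (P : Polynomial ℂ) (hP : 0 < P.natDegree)
    (hroots : ∀ z : ℂ, P.eval z = 0 → ‖z‖ ≤ 1)
    (hsimple : ∀ z : ℂ, P.eval z = 0 → ‖z‖ = 1 → P.derivative.eval z ≠ 0) :
    ∀ z : ℂ, P.derivative.eval z = 0 → ‖z‖ < 1 := by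
  intro z hz
  have hP0 : P ≠ 0 := fun h => by simp [h] at hP
  by_cases hPz : P.eval z = 0
  · rcases lt_or_eq_of_le (hroots z hPz) with h | h
    · exact h
    · exact absurd hz (hsimple z hPz h)
  · by_contra hlt
    push_neg at hlt  -- 1 ≤ ‖z‖
    have hne : ∀ r ∈ P.roots, z ≠ r := by
      intro r hr heq
      exact hPz (heq ▸ (Polynomial.isRoot_of_mem_roots hr))
    -- P = C lc * prod
    have hsplit := (IsAlgClosed.splits P).eq_prod_roots
    set Q : Polynomial ℂ := (P.roots.map (fun r => Polynomial.X - Polynomial.C r)).prod with hQ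
    have hQz : Polynomial.eval z Q ≠ 0 := by
      rw [hQ, Polynomial.eval_multiset_prod]
      refine Multiset.prod_ne_zero ?_
      intro h0
      simp only [Multiset.mem_map] at h0
      obtain ⟨y, hy, hy0⟩ := h0
      obtain ⟨r, hr, rfl⟩ := hy
      simp only [Polynomial.eval_sub, Polynomial.eval_X, Polynomial.eval_C] at hy0
      exact hne r hr (sub_eq_zero.mp hy0)
    have hlc : P.leadingCoeff ≠ 0 := Polynomial.leadingCoeff_ne_zero.mpr hP0
    have hder : P.derivative = Polynomial.C P.leadingCoeff * Polynomial.derivative Q := by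
      conv_lhs => rw [hsplit]
      rw [Polynomial.derivative_C_mul]
    have hS : (P.roots.map (fun r => (z - r)⁻¹)).sum = 0 := by
      have := logd_aux z P.roots hne
      rw [hder, hQ] at hz
      simp only [Polynomial.eval_mul, Polynomial.eval_C, this] at hz
      rcases mul_eq_zero.mp hz with h | h
      · exact absurd h hlc
      · rcases mul_eq_zero.mp h with h | h
        · exact absurd h hQz
        · exact h
    -- multiply by z and take real part
    have hzS : ((P.roots.map (fun r => z * (z - r)⁻¹)).sum).re = 0 := by
      have : (P.roots.map (fun r => z * (z - r)⁻¹)).sum = z * (P.roots.map (fun r => (z - r)⁻¹)).sum := by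
        rw [← Multiset.sum_map_mul_left]
      rw [this, hS, mul_zero, Complex.zero_re]
    have hre : ((P.roots.map (fun r => z * (z - r)⁻¹)).sum).re
        = ((P.roots.map (fun r => (z * (z - r)⁻¹).re)).sum) := by
      have h1 : ∀ (s : Multiset ℂ), (s.sum).re = (s.map Complex.re).sum :=
        fun s => map_multiset_sum Complex.reAddGroupHom s
      rw [h1, Multiset.map_map]
      rfl
    -- each term positive
    have hpos : ∀ x ∈ P.roots.map (fun r => (z * (z - r)⁻¹).re), 0 < x := by
      intro x hx
      obtain ⟨r, hr, rfl⟩ := Multiset.mem_map.mp hx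
      have hzr : z - r ≠ 0 := sub_ne_zero.mpr (hne r hr)
      have hrle : ‖r‖ ≤ 1 := hroots r (Polynomial.isRoot_of_mem_roots hr)
      have key : (z * (z - r)⁻¹).re = (z * (starRingEnd ℂ) (z - r)).re / Complex.normSq (z - r) := by
        rw [← div_eq_mul_inv, Complex.div_re]
        simp only [Complex.mul_re, Complex.conj_re, Complex.conj_im]
        ring
      rw [key]
      apply div_pos
      · have expand : (z * (starRingEnd ℂ) (z - r)).re
            = Complex.normSq z - (z * (starRingEnd ℂ) r).re := by
          simp [map_sub, mul_sub, Complex.sub_re, Complex.mul_conj, Complex.ofReal_re]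
        rw [expand]
        have hb : (z * (starRingEnd ℂ) r).re ≤ ‖z‖ * ‖r‖ := by
          calc (z * (starRingEnd ℂ) r).re ≤ ‖z * (starRingEnd ℂ) r‖ := Complex.re_le_norm _
            _ = ‖z‖ * ‖r‖ := by rw [norm_mul, Complex.norm_conj]
        have hnz : Complex.normSq z = ‖z‖ * ‖z‖ := by
          rw [Complex.normSq_eq_norm_sq]; ring
        rcases lt_or_ge (‖z‖ * ‖r‖) (‖z‖ * ‖z‖) with hc | hc
        · linarith [hnz]
        · have hz0 : (0:ℝ) < ‖z‖ := lt_of_lt_of_le one_pos hlt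
          have h1 : ‖z‖ ≤ ‖r‖ := le_of_mul_le_mul_left hc hz0
          have hr1 : ‖r‖ = 1 := le_antisymm hrle (le_trans hlt h1)
          have hz1 : ‖z‖ = 1 := le_antisymm (le_trans h1 (le_of_eq hr1)) hlt
          have hw : ‖z * (starRingEnd ℂ) r‖ = 1 := by
            rw [norm_mul, Complex.norm_conj, hz1, hr1, mul_one]
          have hr0 : r ≠ 0 := by
            intro h0
            rw [h0] at hr1
            simp at hr1
          have hwne : z * (starRingEnd ℂ) r ≠ 1 := by
            intro h1'
            apply hne r hr
            have hrc : r * (starRingEnd ℂ) r = 1 := by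
              rw [Complex.mul_conj, Complex.normSq_eq_norm_sq, hr1]
              norm_num
            exact mul_right_cancel₀ ((map_ne_zero _).mpr hr0) (h1'.trans hrc.symm)
          have hlt' : (z * (starRingEnd ℂ) r).re < 1 := aux_re_lt _ hw hwne
          rw [hnz, hz1]
          linarith
      · exact Complex.normSq_pos.mpr hzr
    -- roots nonempty
    have hne0 : P.roots ≠ 0 := by
      obtain ⟨w, hw⟩ := Complex.exists_root (f := P) (by rwa [Polynomial.natDegree_pos_iff_degree_pos] at hP)
      intro h0
      have : w ∈ P.roots := by rw [Polynomial.mem_roots hP0]; exact hw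
      rw [h0] at this
      exact absurd this (Multiset.notMem_zero w)
    have hsumpos : (0:ℝ) < (P.roots.map (fun r => (z * (z - r)⁻¹).re)).sum := by
      set M := P.roots.map (fun r => (z * (z - r)⁻¹).re) with hM
      have hM0 : M ≠ 0 := by
        rw [hM]
        simpa using hne0
      obtain ⟨a, ha⟩ := Multiset.exists_mem_of_ne_zero hM0
      have := Multiset.cons_erase ha
      rw [← this, Multiset.sum_cons]
      have h1 : 0 < a := hpos a ha
      have h2 : 0 ≤ (M.erase a).sum :=
        Multiset.sum_nonneg (fun x hx => le_of_lt (hpos x (Multiset.mem_of_mem_erase hx)))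
      linarith
    rw [hre] at hzS
    linarith
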